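/- For every t ∈ ℕ and every finite set Y ⊆ ℝ^t there exists ε_0 > 0 such that for all ε with 0 < ε < ε_0 and all y = (y_1, …, y_t) ∈ Y: y ≤_lex 0 if and only if Σ_{i=1}^{t} y_i · ε^i ≤ 0. -/

import Mathlib

lemma lex_lt_def {t : ℕ} (y z : Fin t → ℝ) :
    toLex y < toLex z ↔ ∃ i, (∀ j, j < i → y j = z j) ∧ y i < z i := Iff.rfl

lemma per_elem {t : ℕ} (y : Fin t → ℝ) :
    ∃ ε₀ : ℝ, 0 < ε₀ ∧ ∀ ε : ℝ, 0 < ε → ε < ε₀ →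
      (toLex y ≤ toLex (0 : Fin t → ℝ) ↔ ∑ i : Fin t, y i * ε ^ ((i : ℕ) + 1) ≤ 0) := by
  by_cases hy : y = 0
  · refine ⟨1, one_pos, fun ε _ _ => ?_⟩
    subst hy
    simp
  · obtain ⟨i₀, hi₀⟩ := Function.ne_iff.1 hy
    have hne : (Finset.univ.filter (fun i => y i ≠ 0)).Nonempty := ⟨i₀, by simpa using hi₀⟩
    set s := Finset.univ.filter (fun i => y i ≠ 0) with hs
    set k := s.min' hne with hk
    have hyk : y k ≠ 0 := by
      have := s.min'_mem hne
      simpa [hs] using this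
    have hzero : ∀ j, j < k → y j = 0 := by
      intro j hj
      by_contra h
      exact absurd (s.min'_le j (by simp [hs, h])) (not_le.2 hj)
    set g : ℝ → ℝ := fun ε => ∑ i : Fin t, y i * ε ^ ((i : ℕ) - (k : ℕ)) with hg
    have hg0 : g 0 = y k := by
      show (∑ i : Fin t, y i * (0:ℝ) ^ ((i : ℕ) - (k : ℕ))) = y k
      rw [Finset.sum_eq_single k]
      · simp
      · intro i _ hik
        rcases lt_or_gt_of_ne hik with h | h
        · simp [hzero i h]
        · have hik' : (k:ℕ) < (i:ℕ) := Fin.lt_def.1 h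
          simp [zero_pow (by omega : (i : ℕ) - (k : ℕ) ≠ 0)]
      · simp
    have hgc : ContinuousAt g 0 := by
      apply Continuous.continuousAt
      exact continuous_finset_sum _ fun i _ => (continuous_const.mul (continuous_pow _))
    obtain ⟨δ, hδpos, hδ⟩ := Metric.continuousAt_iff.1 hgc |y k| (abs_pos.2 hyk)
    refine ⟨δ, hδpos, fun ε hε hεδ => ?_⟩
    have hgε : |g ε - y k| < |y k| := by
      have h1 := hδ (x := ε) (by simp [Real.dist_eq, abs_of_pos hε, hεδ])
      simpa [Real.dist_eq, hg0] using h1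
    -- factor: sum = ε^(k+1) * g ε
    have hfact : ∑ i : Fin t, y i * ε ^ ((i : ℕ) + 1) = ε ^ ((k : ℕ) + 1) * g ε := by
      show _ = ε ^ ((k : ℕ) + 1) * ∑ i : Fin t, y i * ε ^ ((i : ℕ) - (k : ℕ))
      rw [Finset.mul_sum]
      apply Finset.sum_congr rfl
      intro i _
      rcases lt_or_ge i k with h | h
      · simp [hzero i h]
      · have hk' : (k:ℕ) ≤ (i:ℕ) := Fin.le_def.1 h
        rw [← mul_assoc, mul_comm (ε ^ ((k:ℕ)+1)) (y i), mul_assoc, ← pow_add]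
        congr 2
        omega
    have hpow : 0 < ε ^ ((k : ℕ) + 1) := pow_pos hε _
    rcases lt_or_gt_of_ne hyk with hneg | hpos
    · -- y k < 0 : both sides true
      have hgneg : g ε < 0 := by
        have h2 := (abs_lt.1 hgε).2
        rw [abs_of_neg hneg] at h2
        linarith
      constructor
      · intro _
        rw [hfact]
        exact le_of_lt (mul_neg_of_pos_of_neg hpow hgneg)
      · intro _
        exact le_of_lt ((lex_lt_def y 0).2 ⟨k, fun j hj => by simp [hzero j hj], by simpa using hneg⟩)
    · -- y k > 0 : both sides false
      have hgpos : 0 < g ε := by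
        have := abs_lt.1 hgε
        have h2 := this.1
        rw [abs_of_pos hpos] at h2
        linarith
      constructor
      · intro hle
        exfalso
        have : toLex (0 : Fin t → ℝ) < toLex y :=
          (lex_lt_def 0 y).2 ⟨k, fun j hj => by simp [hzero j hj], by simpa using hpos⟩
        exact (not_le.2 this) hle
      · intro hle
        exfalso
        rw [hfact] at hle
        exact absurd hle (not_le.2 (mul_pos hpow hgpos))

theorem stmt3 {t : ℕ} (Y : Set (Fin t → ℝ)) (hY : Y.Finite) :
    ∃ ε₀ : ℝ, 0 < ε₀ ∧ ∀ ε : ℝ, 0 < ε → ε < ε₀ → ∀ y ∈ Y,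
      (toLex y ≤ toLex (0 : Fin t → ℝ) ↔ ∑ i : Fin t, y i * ε ^ ((i : ℕ) + 1) ≤ 0) := by
  refine Set.Finite.induction_on (motive := fun Y _ => ∃ ε₀ : ℝ, 0 < ε₀ ∧ ∀ ε : ℝ, 0 < ε → ε < ε₀ →
      ∀ y ∈ Y, (toLex y ≤ toLex (0 : Fin t → ℝ) ↔
        ∑ i : Fin t, y i * ε ^ ((i : ℕ) + 1) ≤ 0)) Y hY
    ⟨1, one_pos, fun _ _ _ y hy => absurd hy (Set.notMem_empty y)⟩ ?_
  intro a s _ _ ih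
  obtain ⟨ε₁, hε₁, h₁⟩ := per_elem a
  obtain ⟨ε₂, hε₂, h₂⟩ := ih
  refine ⟨min ε₁ ε₂, lt_min hε₁ hε₂, fun ε hε hεm y hy => ?_⟩
  rcases hy with rfl | hy
  · exact h₁ ε hε (lt_of_lt_of_le hεm (min_le_left _ _))
  · exact h₂ ε hε (lt_of_lt_of_le hεm (min_le_right _ _)) y hy
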